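/- Let v ∈ ℤⁿ with ‖v‖_∞ = M, let I ⊆ {1,…,n}, and suppose |v_t| = M for some t ∈ I. Let w̃ ∈ ℤⁿ satisfy w̃_j = v_j for all j ∉ I and |w̃_i| < M for all i ∈ I, and let w be obtained from w̃ by a signed permutation of coordinates. Then either ‖w‖_∞ < ‖v‖_∞, or ‖w‖_∞ = ‖v‖_∞ and w has strictly fewer coordinates of absolute value ‖w‖_∞ than v has coordinates of absolute value ‖v‖_∞. -/

import Mathlib

/-- Let `v ∈ ℤⁿ` with `‖v‖_∞ = M`, `I ⊆ {1,…,n}`, and `|v_t| = M` for some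
`t ∈ I`. Let `wt` agree with `v` outside `I` and satisfy `|wt_i| < M` on `I`, and let `w` be
obtained from `wt` by a signed permutation of coordinates. Then either `‖w‖_∞ < ‖v‖_∞`, or
`‖w‖_∞ = ‖v‖_∞` and `w` has strictly fewer coordinates of maximal absolute value than `v`. -/
theorem stmt_3 (n : ℕ) (v wt w : Fin n → ℤ) (I : Finset (Fin n)) (t : Fin n) (M : ℕ)
    (hM : M = Finset.univ.sup fun i => (v i).natAbs)
    (htI : t ∈ I) (htM : (v t).natAbs = M)
    (hout : ∀ j ∉ I, wt j = v j)
    (hin : ∀ i ∈ I, (wt i).natAbs < M)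
    (σ : Equiv.Perm (Fin n)) (ε : Fin n → ℤ) (hε : ∀ i, ε i = 1 ∨ ε i = -1)
    (hw : ∀ i, w i = ε i * wt (σ i)) :
    (Finset.univ.sup fun i => (w i).natAbs) < M ∨
    ((Finset.univ.sup fun i => (w i).natAbs) = M ∧
      (Finset.univ.filter fun i => (w i).natAbs = M).card <
        (Finset.univ.filter fun i => (v i).natAbs = M).card) := by
  have habs : ∀ i, (w i).natAbs = (wt (σ i)).natAbs := by
    intro i
    rcases hε i with h | h <;> simp [hw i, h, Int.natAbs_mul]
  -- maximum of wt ≤ M, with any attainers outside I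
  have hle : ∀ i, (wt i).natAbs ≤ M := by
    intro i
    by_cases hi : i ∈ I
    · exact (hin i hi).le
    · rw [hout i hi, hM]
      exact Finset.le_sup (f := fun i => (v i).natAbs) (Finset.mem_univ i)
  have hsup : (Finset.univ.sup fun i => (w i).natAbs) ≤ M := by
    refine Finset.sup_le fun i _ => ?_
    rw [habs i]
    exact hle _
  rcases lt_or_eq_of_le hsup with h | h
  · exact Or.inl h
  · right
    refine ⟨h, ?_⟩
    -- the filter for w is the image under σ⁻¹ of the filter for wt
    have hcard : (Finset.univ.filter fun i => (w i).natAbs = M).card =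
        (Finset.univ.filter fun i => (wt i).natAbs = M).card := by
      apply Finset.card_nbij (fun i => σ i)
      · intro i hi
        simp only [Finset.mem_coe, Finset.mem_filter, Finset.mem_univ, true_and] at hi ⊢
        rwa [← habs i]
      · intro a ha b hb hab
        exact σ.injective hab
      · intro b hb
        simp only [Finset.mem_filter, Finset.mem_univ, true_and, Set.mem_image] at hb ⊢
        exact ⟨σ.symm b, by simpa [habs] using hb⟩
    rw [hcard]
    apply Finset.card_lt_card
    constructor
    · intro i hi
      simp only [Finset.mem_filter, Finset.mem_univ, true_and] at hi ⊢
      by_cases hiI : i ∈ I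
      · exact absurd hi (Nat.ne_of_lt (hin i hiI))
      · rwa [← hout i hiI]
    · intro hsub
      have ht : t ∈ Finset.univ.filter fun i => (v i).natAbs = M := by
        simp [htM]
      have := hsub ht
      simp only [Finset.mem_filter, Finset.mem_univ, true_and] at this
      exact absurd this (Nat.ne_of_lt (hin t htI))
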